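/- Define on GV₄ = {0, 1/3, 2/3, 1} the operation x →_{4Ł} y = max(∼x, max(min(δ(∼x ⇒_G x), min(∼δ(x), min(¬_G ¬_G y, x))), x ⇒_G y)), where ∼x = 1 - x, ⇒_G is Gödel implication, ¬_G x = x ⇒_G 0, and δ(x) = ¬_G(∼x). Then for all x, y ∈ GV₄, x →_{4Ł} y = min(1, 1 - x + y), i.e. it coincides with 4-valued Łukasiewicz implication. -/
import Mathlib


noncomputable def Gimp (x y : ℝ) : ℝ := if x ≤ y then 1 else y

noncomputable def Gneg (x : ℝ) : ℝ := Gimp x 0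

noncomputable def delta (x : ℝ) : ℝ := Gneg (1 - x)

def GV4 : Set ℝ := {0, 1/3, 2/3, 1}

theorem four_luk_implication :
    ∀ x ∈ GV4, ∀ y ∈ GV4,
      max (1 - x)
        (max (min (delta (Gimp (1 - x) x))
                  (min (1 - delta x) (min (Gneg (Gneg y)) x)))
             (Gimp x y))
      = min 1 (1 - x + y) := by
  intro x hx y hy
  simp only [GV4, Set.mem_insert_iff, Set.mem_singleton_iff] at hx hy
  rcases hx with rfl | rfl | rfl | rfl <;> rcases hy with rfl | rfl | rfl | rfl <;>
    norm_num [Gimp, Gneg, delta]
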